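/- If X is geometric with mean λ, then its continuous counterpart X_c = T(X) has 2m-th absolute moments E|X_c|^{2m} = m!·(1+λ)^m, i.e., X_c is circularly symmetric Gaussian with total variance 1+λ. -/

import Mathlib

open Real MeasureTheory

lemma exp_tsum' (x : ℝ) : ∑' n : ℕ, x ^ n / n.factorial = Real.exp x := by
  rw [Real.exp_eq_exp_ℝ, NormedSpace.exp_eq_tsum_div]

lemma density_eq' (l : ℝ) (hl : 0 < l) (r : ℂ) :
    (∑' n : ℕ, (1 / (1 + l)) * (l / (1 + l)) ^ n *
      (Real.exp (-(‖r‖ ^ 2)) * ‖r‖ ^ (2 * n) /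
        ((Nat.factorial n : ℝ) * Real.pi)))
      = 1 / (π * (1 + l)) * Real.exp (-(‖r‖ ^ 2) / (1 + l)) := by
  have hl1 : (0:ℝ) < 1 + l := by linarith
  set a : ℝ := ‖r‖ ^ 2 with ha
  have key : ∀ n : ℕ, (1 / (1 + l)) * (l / (1 + l)) ^ n *
      (Real.exp (-a) * ‖r‖ ^ (2 * n) / ((Nat.factorial n : ℝ) * Real.pi))
      = (Real.exp (-a) / (π * (1 + l))) * ((l * a / (1 + l)) ^ n / n.factorial) := by
    intro n
    have h2 : ‖r‖ ^ (2 * n) = a ^ n := by rw [ha, ← pow_mul]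
    have hfac : (0:ℝ) < n.factorial := by positivity
    rw [h2]
    simp only [div_pow, mul_pow]
    field_simp
  rw [tsum_congr key, tsum_mul_left, exp_tsum']
  have hexp : Real.exp (-a) * Real.exp (l * a / (1 + l)) = Real.exp (-a / (1 + l)) := by
    rw [← Real.exp_add]; congr 1; field_simp; ring
  calc Real.exp (-a) / (π * (1 + l)) * Real.exp (l * a / (1 + l))
      = Real.exp (-a) * Real.exp (l * a / (1 + l)) / (π * (1 + l)) := by ring
    _ = 1 / (π * (1 + l)) * Real.exp (-a / (1 + l)) := by rw [hexp]; ring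

/-- pmf of a geometric random variable on ℕ with mean `λ`. -/
noncomputable def geomPmf (l : ℝ) (n : ℕ) : ℝ := (1 / (1 + l)) * (l / (1 + l)) ^ n

/-- The density on ℂ of the continuous counterpart `X_c = T(X)` of a pmf `p` on ℕ. -/
noncomputable def contDensity (p : ℕ → ℝ) (r : ℂ) : ℝ :=
  ∑' n : ℕ, p n * (Real.exp (-(‖r‖ ^ 2)) * ‖r‖ ^ (2 * n) /
    ((Nat.factorial n : ℝ) * Real.pi))

theorem geometric_continuous_moments (l : ℝ) (hl : 0 < l) (m : ℕ) :
    (∫ r : ℂ, ‖r‖ ^ (2 * m) * contDensity (geomPmf l) r)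
      = (Nat.factorial m : ℝ) * (1 + l) ^ m := by
  have hl1 : (0:ℝ) < 1 + l := by linarith
  have hb : (0:ℝ) < 1/(1+l) := by positivity
  have hcong : ∀ r : ℂ, ‖r‖ ^ (2*m) * contDensity (geomPmf l) r
      = (1/(π*(1+l))) * (‖r‖ ^ ((2*m : ℕ):ℝ) * Real.exp (-(1/(1+l)) * ‖r‖ ^ (2:ℝ))) := by
    intro r
    have h1 : contDensity (geomPmf l) r = 1 / (π * (1 + l)) *
        Real.exp (-(‖r‖ ^ 2) / (1 + l)) := by
      rw [contDensity]
      simp only [geomPmf]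
      exact density_eq' l hl r
    rw [h1]
    have h2 : ‖r‖ ^ ((2*m : ℕ):ℝ) = ‖r‖ ^ (2*m) := by
      rw [Real.rpow_natCast]
    have h3 : ‖r‖ ^ (2:ℝ) = ‖r‖ ^ 2 := by
      rw [show (2:ℝ) = ((2:ℕ):ℝ) by norm_num, Real.rpow_natCast]
    rw [h2, h3]
    rw [show -(1/(1+l)) * ‖r‖ ^ 2 = -(‖r‖ ^ 2) / (1+l) by ring]
    ring
  simp_rw [hcong]
  rw [MeasureTheory.integral_const_mul,
    Complex.integral_rpow_mul_exp_neg_mul_rpow one_le_two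
      (by have : (0:ℝ) ≤ ((2*m:ℕ):ℝ) := Nat.cast_nonneg _; linarith) hb]
  have hg : Real.Gamma ((((2*m : ℕ):ℝ) + 2) / 2) = (Nat.factorial m : ℝ) := by
    rw [show (((2*m : ℕ):ℝ) + 2) / 2 = (m : ℝ) + 1 by push_cast; ring,
      Real.Gamma_nat_eq_factorial]
  have hp : (1/(1+l) : ℝ) ^ (-(((2*m:ℕ):ℝ) + 2) / 2) = (1+l) ^ (m+1) := by
    rw [one_div, ← Real.rpow_neg_one (1+l), ← Real.rpow_natCast (1+l) (m+1),
      ← Real.rpow_mul hl1.le]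
    congr 1
    push_cast; ring
  rw [hg, hp]
  field_simp
  ring
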